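/- B^sa is dense in (C^sa, d_R): for any self-adjoint operator T with spectral resolution (E_λ), the bounded truncations f_n(T) = ∫_{[−n,n]} λ dE_λ + ∫_{|λ|>n} n·sgn(λ) dE_λ satisfy ‖F(T) − F(f_n(T))‖ ≤ |n/√(1+n²) − 1| → 0 as n → ∞. -/

import Mathlib

open Complex Set MeasureTheory Filter Topology

noncomputable section

/-- A (possibly unbounded) self-adjoint operator on `H`, encoded together with its
Borel functional calculus: `op` is the operator itself (a densely defined symmetric
partial linear map), `phi` is the Borel functional calculus `f ↦ f(op)`, a star algebra
homomorphism from bounded Borel functions (encoded as arbitrary functions `ℝ → ℂ`;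
`phi` is only used on bounded functions) into bounded operators, contractive with
respect to the sup norm, and compatible with `op` in the sense that
`phi (fun t => (t+i)⁻¹)` is the resolvent `(op + i)⁻¹`. -/
structure SAOp (H : Type*) [NormedAddCommGroup H] [InnerProductSpace ℂ H]
    [CompleteSpace H] where
  op : H →ₗ.[ℂ] H
  dense_dom : Dense (op.domain : Set H)
  symm : ∀ x y : op.domain, (inner ℂ (op x) (y : H) : ℂ) = inner ℂ (x : H) (op y)
  phi : (ℝ → ℂ) →⋆ₐ[ℂ] (H →L[ℂ] H)
  norm_le : ∀ (f : ℝ → ℂ) (C : ℝ), 0 ≤ C → (∀ x, ‖f x‖ ≤ C) → ‖phi f‖ ≤ C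
  res_mem : ∀ x : H, phi (fun t => ((t : ℂ) + Complex.I)⁻¹) x ∈ op.domain
  op_res_add : ∀ x : H,
    op ⟨phi (fun t => ((t : ℂ) + Complex.I)⁻¹) x, res_mem x⟩
      + Complex.I • phi (fun t => ((t : ℂ) + Complex.I)⁻¹) x = x
  res_op : ∀ y : op.domain,
    phi (fun t => ((t : ℂ) + Complex.I)⁻¹) (op y + Complex.I • (y : H)) = (y : H)

namespace SAOp

variable {H : Type*} [NormedAddCommGroup H] [InnerProductSpace ℂ H] [CompleteSpace H]

/-- The resolvent `(T + i)⁻¹`. -/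
def res (T : SAOp H) : H →L[ℂ] H := T.phi (fun t => ((t : ℂ) + Complex.I)⁻¹)

/-- The Riesz transform `F(T) = T (I + T²)^{-1/2}`. -/
def rieszF (T : SAOp H) : H →L[ℂ] H :=
  T.phi (fun t => (t : ℂ) / ((Real.sqrt (1 + t ^ 2) : ℝ) : ℂ))

/-- `(I + T²)⁻¹`. -/
def invOnePlusSq (T : SAOp H) : H →L[ℂ] H :=
  T.phi (fun t => (((1 + t ^ 2 : ℝ)) : ℂ)⁻¹)

/-- `(I + T²)^{-1/2} = |T + i|⁻¹`. -/
def invSqrt (T : SAOp H) : H →L[ℂ] H :=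
  T.phi (fun t => ((Real.sqrt (1 + t ^ 2) : ℝ) : ℂ)⁻¹)

/-- The spectral projection `1_{(l,∞)}(T)`. -/
def specProjGt (T : SAOp H) (l : ℝ) : H →L[ℂ] H :=
  T.phi (Set.indicator (Set.Ioi l) 1)

/-- The spectral projection `1_{[l,∞)}(T)`. -/
def specProjGe (T : SAOp H) (l : ℝ) : H →L[ℂ] H :=
  T.phi (Set.indicator (Set.Ici l) 1)

/-- The spectrum of `T` does not meet `s`. -/
def Avoids (T : SAOp H) (s : Set ℝ) : Prop := T.phi (Set.indicator s 1) = 0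

/-- `T` is a self-adjoint Fredholm operator: `0` is not in the essential spectrum,
i.e. some spectral projection `1_{(-ε,ε)}(T)` has finite rank. -/
def IsFredholm (T : SAOp H) : Prop :=
  ∃ ε > (0 : ℝ), FiniteDimensional ℂ
    (LinearMap.range ((T.phi (Set.indicator (Set.Ioo (-ε) ε) 1) : H →L[ℂ] H) : H →ₗ[ℂ] H))

end SAOp

/-- `P` is an orthogonal projection. -/
def IsOrthoProj {H : Type*} [NormedAddCommGroup H] [InnerProductSpace ℂ H]
    [CompleteSpace H] (P : H →L[ℂ] H) : Prop :=
  IsSelfAdjoint P ∧ IsIdempotentElem P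

/-- A linear map is Fredholm if its kernel and cokernel are finite dimensional. -/
def IsFredholmLM {M N : Type*} [AddCommGroup M] [Module ℂ M] [AddCommGroup N]
    [Module ℂ N] (f : M →ₗ[ℂ] N) : Prop :=
  FiniteDimensional ℂ (LinearMap.ker f) ∧ FiniteDimensional ℂ (N ⧸ LinearMap.range f)

/-- The Fredholm index of a linear map: `dim ker − dim coker`. -/
noncomputable def indexLM {M N : Type*} [AddCommGroup M] [Module ℂ M] [AddCommGroup N]
    [Module ℂ N] (f : M →ₗ[ℂ] N) : ℤ :=
  (Module.finrank ℂ (LinearMap.ker f) : ℤ) -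
    (Module.finrank ℂ (N ⧸ LinearMap.range f) : ℤ)

/-- For projections `P Q`, the operator `Q : ran P → ran Q`. -/
noncomputable def pairRestrict {H : Type*} [NormedAddCommGroup H]
    [InnerProductSpace ℂ H] (P Q : H →L[ℂ] H) :
    (LinearMap.range (P : H →ₗ[ℂ] H)) →ₗ[ℂ] (LinearMap.range (Q : H →ₗ[ℂ] H)) :=
  (Q : H →ₗ[ℂ] H).restrict (fun x _ => LinearMap.mem_range_self _ x)

/-- `(P,Q)` is a Fredholm pair of projections. -/
def IsFredholmPair {H : Type*} [NormedAddCommGroup H] [InnerProductSpace ℂ H]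
    (P Q : H →L[ℂ] H) : Prop := IsFredholmLM (pairRestrict P Q)

/-- The index `ind(P,Q)` of a pair of projections. -/
noncomputable def pairIndex {H : Type*} [NormedAddCommGroup H]
    [InnerProductSpace ℂ H] (P Q : H →L[ℂ] H) : ℤ := indexLM (pairRestrict P Q)


lemma st16_g_le_one (y : ℝ) : y / Real.sqrt (1 + y ^ 2) ≤ 1 := by
  have hs0 : (0:ℝ) < Real.sqrt (1 + y ^ 2) := Real.sqrt_pos.2 (by positivity)
  rw [div_le_one hs0]
  rcases le_or_gt y 0 with hy | hy
  · exact hy.trans hs0.le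
  · calc y = Real.sqrt (y ^ 2) := (Real.sqrt_sq hy.le).symm
      _ ≤ Real.sqrt (1 + y ^ 2) := Real.sqrt_le_sqrt (by nlinarith)

lemma st16_g_mono (n y : ℝ) (hn : 0 ≤ n) (hy : n ≤ y) :
    n / Real.sqrt (1 + n ^ 2) ≤ y / Real.sqrt (1 + y ^ 2) := by
  have hu0 : (0:ℝ) < Real.sqrt (1 + n ^ 2) := Real.sqrt_pos.2 (by positivity)
  have hs0 : (0:ℝ) < Real.sqrt (1 + y ^ 2) := Real.sqrt_pos.2 (by positivity)
  have hu2 : (Real.sqrt (1 + n ^ 2)) ^ 2 = 1 + n ^ 2 := Real.sq_sqrt (by positivity)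
  have hs2 : (Real.sqrt (1 + y ^ 2)) ^ 2 = 1 + y ^ 2 := Real.sq_sqrt (by positivity)
  have hy0 : 0 ≤ y := hn.trans hy
  rw [div_le_div_iff₀ hu0 hs0]
  have h1 : (n * Real.sqrt (1 + y ^ 2)) ^ 2 ≤ (y * Real.sqrt (1 + n ^ 2)) ^ 2 := by
    rw [mul_pow, mul_pow, hu2, hs2]; nlinarith
  calc n * Real.sqrt (1 + y ^ 2) = Real.sqrt ((n * Real.sqrt (1 + y ^ 2)) ^ 2) :=
        (Real.sqrt_sq (by positivity)).symm
    _ ≤ Real.sqrt ((y * Real.sqrt (1 + n ^ 2)) ^ 2) := Real.sqrt_le_sqrt h1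
    _ = y * Real.sqrt (1 + n ^ 2) := Real.sqrt_sq (by positivity)

lemma st16_trunc_bound (n x : ℝ) (hn : 0 ≤ n) :
    |x / Real.sqrt (1 + x ^ 2) -
      (max (-n) (min n x)) / Real.sqrt (1 + (max (-n) (min n x)) ^ 2)|
      ≤ 1 - n / Real.sqrt (1 + n ^ 2) := by
  have hgn1 : n / Real.sqrt (1 + n ^ 2) ≤ 1 := st16_g_le_one n
  rcases le_or_gt x (-n) with hx | hx
  · -- x ≤ -n : truncation is -n
    have hmin : min n x = x := min_eq_right (by linarith)
    have hmax : max (-n) x = -n := max_eq_left hx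
    rw [hmin, hmax, neg_sq, neg_div, sub_neg_eq_add]
    have h1 : (-x) / Real.sqrt (1 + (-x) ^ 2) ≤ 1 := st16_g_le_one (-x)
    have h2 : n / Real.sqrt (1 + n ^ 2) ≤ (-x) / Real.sqrt (1 + (-x) ^ 2) :=
      st16_g_mono n (-x) hn (by linarith)
    rw [neg_sq, neg_div] at h1 h2
    rw [abs_le]; constructor <;> linarith
  · rcases le_or_gt x n with hx2 | hx2
    · -- truncation is x
      have hmin : min n x = x := min_eq_right hx2
      have hmax : max (-n) x = x := max_eq_right hx.le
      rw [hmin, hmax, sub_self, abs_zero]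
      linarith
    · -- x > n : truncation is n
      have hmin : min n x = n := min_eq_left hx2.le
      have hmax : max (-n) n = n := max_eq_right (by linarith)
      rw [hmin, hmax]
      have h1 : x / Real.sqrt (1 + x ^ 2) ≤ 1 := st16_g_le_one x
      have h2 : n / Real.sqrt (1 + n ^ 2) ≤ x / Real.sqrt (1 + x ^ 2) :=
        st16_g_mono n x hn hx2.le
      rw [abs_le]; constructor <;> linarith

lemma st16_abs_bound (n : ℝ) (hn : 0 ≤ n) :
    |n / Real.sqrt (1 + n ^ 2) - 1| ≤ 1 / (n + 1) := by
  have hu0 : (0:ℝ) < Real.sqrt (1 + n ^ 2) := Real.sqrt_pos.2 (by positivity)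
  have hu2 : (Real.sqrt (1 + n ^ 2)) ^ 2 = 1 + n ^ 2 := Real.sq_sqrt (by positivity)
  have hnu : n ≤ Real.sqrt (1 + n ^ 2) := by
    calc n = Real.sqrt (n ^ 2) := (Real.sqrt_sq hn).symm
      _ ≤ _ := Real.sqrt_le_sqrt (by nlinarith)
  have hun1 : Real.sqrt (1 + n ^ 2) ≤ n + 1 := by
    calc Real.sqrt (1 + n ^ 2) ≤ Real.sqrt ((n + 1) ^ 2) :=
          Real.sqrt_le_sqrt (by nlinarith)
      _ = n + 1 := Real.sqrt_sq (by linarith)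
  have hle : n / Real.sqrt (1 + n ^ 2) ≤ 1 := st16_g_le_one n
  rw [abs_sub_comm, _root_.abs_of_nonneg (by linarith)]
  have : 1 - n / Real.sqrt (1 + n ^ 2) = (Real.sqrt (1 + n ^ 2) - n) / Real.sqrt (1 + n ^ 2) := by
    field_simp
  rw [this, div_le_div_iff₀ hu0 (by linarith)]
  nlinarith

/-- `𝔅^sa` is dense in `(𝒞^sa, d_R)`: for any self-adjoint `T`, the
bounded truncations `f_n(T)` (with `f_n(λ) = λ` for `|λ| ≤ n`, `f_n(λ) = n·sgn λ`
for `|λ| > n`) satisfy `‖F(T) - F(f_n(T))‖ ≤ |n/√(1+n²) - 1| → 0`. -/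
theorem statement16 {H : Type*} [NormedAddCommGroup H] [InnerProductSpace ℂ H]
    [CompleteSpace H] (T : SAOp H) :
    (∀ n : ℕ, ‖T.rieszF - T.phi (fun x =>
        ((max (-(n : ℝ)) (min (n : ℝ) x) : ℝ) : ℂ) /
          ((Real.sqrt (1 + (max (-(n : ℝ)) (min (n : ℝ) x)) ^ 2) : ℝ) : ℂ))‖
      ≤ |(n : ℝ) / Real.sqrt (1 + (n : ℝ) ^ 2) - 1|) ∧
    Tendsto (fun n : ℕ => ‖T.rieszF - T.phi (fun x =>
        ((max (-(n : ℝ)) (min (n : ℝ) x) : ℝ) : ℂ) /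
          ((Real.sqrt (1 + (max (-(n : ℝ)) (min (n : ℝ) x)) ^ 2) : ℝ) : ℂ))‖)
      atTop (𝓝 0) := by
  have key : ∀ n : ℕ, ‖T.rieszF - T.phi (fun x =>
        ((max (-(n : ℝ)) (min (n : ℝ) x) : ℝ) : ℂ) /
          ((Real.sqrt (1 + (max (-(n : ℝ)) (min (n : ℝ) x)) ^ 2) : ℝ) : ℂ))‖
      ≤ |(n : ℝ) / Real.sqrt (1 + (n : ℝ) ^ 2) - 1| := by
    intro n
    unfold SAOp.rieszF
    rw [← map_sub]
    refine T.norm_le _ _ (abs_nonneg _) fun x => ?_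
    have h := st16_trunc_bound (n : ℝ) x (Nat.cast_nonneg n)
    have h2 := st16_g_le_one (n : ℝ)
    simp only [Pi.sub_apply]
    rw [← Complex.ofReal_div, ← Complex.ofReal_div, ← Complex.ofReal_sub,
      Complex.norm_real]
    calc |_| ≤ 1 - (n : ℝ) / Real.sqrt (1 + (n : ℝ) ^ 2) := h
      _ = |(n : ℝ) / Real.sqrt (1 + (n : ℝ) ^ 2) - 1| := by
          rw [abs_sub_comm, _root_.abs_of_nonneg (by linarith)]
  refine ⟨key, squeeze_zero (fun n => norm_nonneg _)
    (fun n => (key n).trans (st16_abs_bound (n : ℝ) (Nat.cast_nonneg n))) ?_⟩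
  exact tendsto_one_div_add_atTop_nhds_zero_nat
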